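/- Let T = R_{2r+1}(P^1, …, P^{2r+1}) be the composition of tournaments P^1, …, P^{2r+1} over the highly regular tournament R_{2r+1}, with r ≥ 1, and let χ(P^i) = k_i for each i. Suppose there are indices s and t such that k_s > k_t, k_t ≥ k_ℓ for every ℓ ∈ {1, …, 2r+1} \ {s, t}, and k_s ≥ 2k_t. Then χ(T) = k_s. -/
import Mathlib


/-- A tournament: an irreflexive relation such that for every pair of distinct
vertices exactly one of the two directions holds. -/
def IsTournament {V : Type*} (rel : V → V → Prop) : Prop :=
  (∀ v, ¬ rel v v) ∧ ∀ u v : V, u ≠ v → (rel u v ↔ ¬ rel v u)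

/-- A set `S` is acyclic (transitive) in a tournament `rel`: the relation restricted
to `S` is transitive; for a tournament this is equivalent to the restriction being a
strict linear order, i.e. to the induced subtournament having no directed cycle. -/
def AcyclicIn {V : Type*} (rel : V → V → Prop) (S : Set V) : Prop :=
  ∀ a ∈ S, ∀ b ∈ S, ∀ c ∈ S, rel a b → rel b c → rel a c

/-- The (acyclic) chromatic number: the least `k` such that there is a coloring of the
vertices with `k` colors all of whose color classes are acyclic sets. -/
noncomputable def chromaticNumber {V : Type*} (rel : V → V → Prop) : ℕ :=
  sInf {k : ℕ | ∃ c : V → Fin k, ∀ i : Fin k, AcyclicIn rel {v | c v = i}}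

/-- The dimension of the acyclic complex of a tournament: the maximum size of an
acyclic set, minus one. -/
noncomputable def acyDim {V : Type*} (rel : V → V → Prop) : ℕ :=
  sSup {n : ℕ | ∃ S : Finset V, AcyclicIn rel ↑S ∧ S.card = n} - 1

/-- The edge relation of the highly regular tournament `R_{2r+1}` on `ZMod (2r+1)`:
`i → j` iff `j ≡ i + l (mod 2r+1)` for some `1 ≤ l ≤ r`. -/
def hrRel (r : ℕ) (i j : ZMod (2 * r + 1)) : Prop :=
  ∃ l : ℕ, 1 ≤ l ∧ l ≤ r ∧ j = i + (l : ZMod (2 * r + 1))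

/-- The edge relation of the composition `R_{2q+1}(P^1, …, P^{2q+1})` of the tournaments
`relP i` over the highly regular tournament `R_{2q+1}`: inside a block use the block's
relation, between different blocks use the highly regular relation on the indices. -/
def compTournRel (q : ℕ) {V : ZMod (2 * q + 1) → Type*} (relP : ∀ i, V i → V i → Prop)
    (u v : Σ i, V i) : Prop :=
  (∃ h : u.1 = v.1, relP v.1 (h ▸ u.2) v.2) ∨ (u.1 ≠ v.1 ∧ hrRel q u.1 v.1)

/- ======================= auxiliary material ======================= -/

section Aux

/-- If a tournament has a "rank" function strictly increasing along edges within `S`,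
then `S` is acyclic. -/
lemma acyclic_of_mono {W : Type*} {rel : W → W → Prop} (ht : IsTournament rel)
    (S : Set W) (f : W → ℕ)
    (hf : ∀ a ∈ S, ∀ b ∈ S, rel a b → f a < f b) : AcyclicIn rel S := by
  intro a ha b hb c hc hab hbc
  have h1 := hf a ha b hb hab
  have h2 := hf b hb c hc hbc
  have hac : a ≠ c := by
    intro h; subst h; exact absurd (h1.trans h2) (lt_irrefl _)
  by_contra hnot
  have hca : rel c a := by
    by_contra h
    exact hnot ((ht.2 a c hac).mpr h)
  have := hf c hc a ha hca
  omega

/-- The rank of a vertex relative to a set: the number of in-neighbours inside `S`. -/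
noncomputable def rankOf {W : Type*} (rel : W → W → Prop) (S : Set W) (v : W) : ℕ :=
  (S ∩ {u | rel u v}).ncard

lemma rank_lt {W : Type*} [Finite W] {rel : W → W → Prop} (ht : IsTournament rel)
    {S : Set W} (hS : AcyclicIn rel S) {a b : W} (ha : a ∈ S) (hb : b ∈ S)
    (hab : rel a b) : rankOf rel S a < rankOf rel S b := by
  apply Set.ncard_lt_ncard _ (Set.toFinite _)
  rw [Set.ssubset_iff_of_subset]
  · exact ⟨a, ⟨ha, hab⟩, fun hmem => ht.1 a hmem.2⟩
  · rintro u ⟨huS, hua⟩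
    exact ⟨huS, hS u huS a ha b hb hua hab⟩

lemma rankOf_le_card {W : Type*} [Fintype W] (rel : W → W → Prop) (S : Set W) (v : W) :
    rankOf rel S v ≤ Fintype.card W := by
  have := Set.ncard_le_ncard (Set.subset_univ (S ∩ {u | rel u v})) (Set.toFinite _)
  rwa [Set.ncard_univ, Nat.card_eq_fintype_card] at this

/- facts about the highly regular tournament -/

lemma hr_asymm (q : ℕ) (i j : ZMod (2 * q + 1)) (h1 : hrRel q i j) (h2 : hrRel q j i) :
    False := by
  haveI : NeZero (2 * q + 1) := ⟨by omega⟩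
  obtain ⟨l1, hl11, hl12, he1⟩ := h1
  obtain ⟨l2, hl21, hl22, he2⟩ := h2
  have : ((l1 + l2 : ℕ) : ZMod (2 * q + 1)) = 0 := by
    push_cast
    have : i = i + ((l1 : ZMod (2*q+1)) + l2) := by
      conv_lhs => rw [he2, he1]
      ring
    linear_combination -this
  rw [ZMod.natCast_eq_zero_iff] at this
  have := Nat.le_of_dvd (by omega) this
  omega

lemma hr_total (q : ℕ) (i j : ZMod (2 * q + 1)) (hne : i ≠ j) :
    hrRel q i j ∨ hrRel q j i := by
  haveI : NeZero (2 * q + 1) := ⟨by omega⟩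
  set d := (j - i).val with hd
  have hdc : ((d : ℕ) : ZMod (2 * q + 1)) = j - i := by
    rw [hd, ZMod.natCast_val, ZMod.cast_id]
  have hdlt : d < 2 * q + 1 := ZMod.val_lt _
  have hd0 : d ≠ 0 := by
    intro h
    rw [h] at hdc
    apply hne
    have : j - i = 0 := by rw [← hdc]; simp
    linear_combination -this
  rcases le_or_gt d q with h | h
  · left
    exact ⟨d, by omega, h, by rw [hdc]; ring⟩
  · right
    refine ⟨2 * q + 1 - d, by omega, by omega, ?_⟩
    have hcast : ((2 * q + 1 - d : ℕ) : ZMod (2 * q + 1)) = -(d : ZMod (2 * q + 1)) := by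
      rw [Nat.cast_sub hdlt.le, ZMod.natCast_self]
      ring
    rw [hcast, hdc]
    ring

lemma comp_same (q : ℕ) {V : ZMod (2 * q + 1) → Type*} (relP : ∀ i, V i → V i → Prop)
    (i : ZMod (2 * q + 1)) (x y : V i) :
    compTournRel q relP ⟨i, x⟩ ⟨i, y⟩ ↔ relP i x y := by
  constructor
  · rintro (⟨h, hrel⟩ | ⟨hne, _⟩)
    · exact hrel
    · exact absurd rfl hne
  · intro h
    exact Or.inl ⟨rfl, h⟩

lemma comp_diff (q : ℕ) {V : ZMod (2 * q + 1) → Type*} (relP : ∀ i, V i → V i → Prop)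
    (i j : ZMod (2 * q + 1)) (x : V i) (y : V j) (hij : i ≠ j) :
    compTournRel q relP ⟨i, x⟩ ⟨j, y⟩ ↔ hrRel q i j := by
  constructor
  · rintro (⟨h, _⟩ | ⟨_, hr⟩)
    · exact absurd h hij
    · exact hr
  · intro h
    exact Or.inr ⟨hij, h⟩

lemma comp_tourn (q : ℕ) {V : ZMod (2 * q + 1) → Type*} (relP : ∀ i, V i → V i → Prop)
    (h : ∀ i, IsTournament (relP i)) : IsTournament (compTournRel q relP) := by
  constructor
  · rintro ⟨i, x⟩ hrel
    rw [comp_same] at hrel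
    exact (h i).1 x hrel
  · rintro ⟨i, x⟩ ⟨j, y⟩ hne
    by_cases hij : i = j
    · subst hij
      have hxy : x ≠ y := fun he => hne (by rw [he])
      rw [comp_same, comp_same]
      exact (h i).2 x y hxy
    · rw [comp_diff _ _ _ _ _ _ hij, comp_diff _ _ _ _ _ _ (Ne.symm hij)]
      constructor
      · intro h1 h2
        exact hr_asymm q i j h1 h2
      · intro h1
        rcases hr_total q i j hij with h2 | h2
        · exact h2
        · exact absurd h2 h1

/-- The "arc position" of a block index relative to `s`. -/
noncomputable def avx (r : ℕ) (s i : ZMod (2 * r + 1)) : ℕ := (i - s).val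

/-- Color offset: blocks on the "far" side of `s` use the second palette. -/
noncomputable def offs (r kt : ℕ) (s i : ZMod (2 * r + 1)) : ℕ :=
  if r + 1 ≤ avx r s i then kt else 0

/-- Position of a block in the linear order suitable for a color with value `cv`. -/
noncomputable def posn (r kt cv : ℕ) (s i : ZMod (2 * r + 1)) : ℕ :=
  if avx r s i = 0 then (if kt ≤ cv then 2 * r + 1 else 0) else avx r s i

lemma pos_lt (r kt cv : ℕ) (s i j : ZMod (2 * r + 1))
    (hij : hrRel r i j)
    (hiA : cv < kt → avx r s i ≤ r) (hjA : cv < kt → avx r s j ≤ r)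
    (hiB : kt ≤ cv → avx r s i = 0 ∨ r + 1 ≤ avx r s i)
    (hjB : kt ≤ cv → avx r s j = 0 ∨ r + 1 ≤ avx r s j) :
    posn r kt cv s i < posn r kt cv s j := by
  haveI : NeZero (2 * r + 1) := ⟨by omega⟩
  obtain ⟨l, hl1, hlr, hj⟩ := hij
  have key : avx r s j = (avx r s i + l) % (2 * r + 1) := by
    unfold avx
    have hsub : j - s = (i - s) + (l : ZMod (2 * r + 1)) := by rw [hj]; ring
    rw [hsub, ZMod.val_add, ZMod.val_natCast, Nat.add_mod_mod]
  have hvi : avx r s i < 2 * r + 1 := ZMod.val_lt _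
  have hvj : avx r s j < 2 * r + 1 := ZMod.val_lt _
  have key2 : avx r s j = avx r s i + l ∨
      (2 * r + 1 ≤ avx r s i + l ∧ avx r s j + (2 * r + 1) = avx r s i + l) := by
    rcases Nat.lt_or_ge (avx r s i + l) (2 * r + 1) with h | h
    · left; rw [key, Nat.mod_eq_of_lt h]
    · right
      refine ⟨h, ?_⟩
      rw [key, Nat.mod_eq_sub_mod h, Nat.mod_eq_of_lt (by omega)]
      omega
  unfold posn
  rcases Nat.lt_or_ge cv kt with hc | hc
  · have h1 := hiA hc
    have h2 := hjA hc
    rcases key2 with hk2 | hk2 <;> split_ifs <;> omega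
  · have h1 := hiB hc
    have h2 := hjB hc
    rcases key2 with hk2 | hk2 <;> rcases h1 with h1 | h1 <;> rcases h2 with h2 | h2 <;>
      split_ifs <;> omega

end Aux

/-- Let `T = R_{2r+1}(P^1, …, P^{2r+1})` with `r ≥ 1` and `χ(P^i) = k_i`. If there are
indices `s, t` with `k_s > k_t`, `k_t ≥ k_ℓ` for all other `ℓ`, and `k_s ≥ 2 k_t`,
then `χ(T) = k_s`. -/
theorem stmt11 (r : ℕ) (hr : 1 ≤ r) (V : ZMod (2 * r + 1) → Type)
    [∀ i, Fintype (V i)] [∀ i, Nonempty (V i)]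
    (relP : ∀ i, V i → V i → Prop) (htour : ∀ i, IsTournament (relP i))
    (k : ZMod (2 * r + 1) → ℕ) (hk : ∀ i, chromaticNumber (relP i) = k i)
    (s t : ZMod (2 * r + 1)) (hst : k t < k s)
    (hmax : ∀ l, l ≠ s → l ≠ t → k l ≤ k t)
    (h2 : 2 * k t ≤ k s) :
    chromaticNumber (compTournRel r relP) = k s := by
  haveI : NeZero (2 * r + 1) := ⟨by omega⟩
  -- optimal colorings of the blocks
  have hSne : ∀ i, {n : ℕ | ∃ c : V i → Fin n, ∀ col : Fin n,
      AcyclicIn (relP i) {v | c v = col}}.Nonempty := by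
    intro i
    refine ⟨Fintype.card (V i), Fintype.equivFin (V i),
      fun col a ha b hb c2 hc2 hab hbc => ?_⟩
    have hab' : a = b := (Fintype.equivFin (V i)).injective (by rw [Set.mem_setOf_eq] at ha hb; rw [ha, hb])
    rwa [hab']
  have hg0 : ∀ i, ∃ c : V i → Fin (k i), ∀ col : Fin (k i),
      AcyclicIn (relP i) {v | c v = col} := by
    intro i
    have h1 := Nat.sInf_mem (hSne i)
    have h2' := hk i
    unfold chromaticNumber at h2'
    rw [h2'] at h1
    exact h1
  choose g hgac using hg0
  have hkle : ∀ i, i ≠ s → k i ≤ k t := by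
    intro i his
    by_cases hit : i = t
    · subst hit; exact le_rfl
    · exact hmax i his hit
  have havs : avx r s s = 0 := by simp [avx]
  have hCb : ∀ (i : ZMod (2 * r + 1)) (x : V i), offs r (k t) s i + (g i x).val < k s := by
    intro i x
    have hb := (g i x).isLt
    by_cases hri : r + 1 ≤ avx r s i
    · have his : i ≠ s := fun he => by rw [he, havs] at hri; omega
      have := hkle i his
      rw [offs, if_pos hri]
      omega
    · rw [offs, if_neg hri]
      by_cases his : i = s
      · subst his; omega
      · have := hkle i his; omega
  -- the coloring of the composition
  have hmemT : k s ∈ {n : ℕ | ∃ c : (Σ i, V i) → Fin n, ∀ col : Fin n,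
      AcyclicIn (compTournRel r relP) {v | c v = col}} := by
    refine ⟨fun u => ⟨offs r (k t) s u.1 + (g u.1 u.2).val, hCb u.1 u.2⟩, fun col => ?_⟩
    -- per-vertex constraints on the blocks a color class can touch
    have hcon : ∀ (i : ZMod (2 * r + 1)) (x : V i),
        offs r (k t) s i + (g i x).val = col.val →
        (col.val < k t → avx r s i ≤ r) ∧
        (k t ≤ col.val → avx r s i = 0 ∨ r + 1 ≤ avx r s i) := by
      intro i x hval
      have hb := (g i x).isLt
      by_cases hri : r + 1 ≤ avx r s i
      · rw [offs, if_pos hri] at hval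
        exact ⟨fun h => by omega, fun h => Or.inr hri⟩
      · rw [offs, if_neg hri] at hval
        refine ⟨fun h => by omega, fun h => ?_⟩
        left
        by_contra havi
        have his : i ≠ s := fun he => havi (by rw [he, havs])
        have := hkle i his
        omega
    obtain ⟨N, hN⟩ : ∃ N, ∀ i : ZMod (2 * r + 1), Fintype.card (V i) < N :=
      ⟨(Finset.univ.sup fun i : ZMod (2 * r + 1) => Fintype.card (V i)) + 1,
        fun i => Nat.lt_succ_of_le (Finset.le_sup (f := fun i => Fintype.card (V i)) (Finset.mem_univ i))⟩
    apply acyclic_of_mono (comp_tourn r relP htour) _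
      (fun u => posn r (k t) col.val s u.1 * N +
        rankOf (relP u.1) {w | g u.1 w = g u.1 u.2} u.2)
    rintro ⟨i, x⟩ hu ⟨j, y⟩ hv huv
    rw [Set.mem_setOf_eq] at hu hv
    have hvalu : offs r (k t) s i + (g i x).val = col.val := congrArg Fin.val hu
    have hvalv : offs r (k t) s j + (g j y).val = col.val := congrArg Fin.val hv
    rcases huv with ⟨h, hrel⟩ | ⟨hne2, hij⟩
    · -- same block
      dsimp only at h
      subst h
      have hrel' : relP i x y := hrel
      have hgxy : g i x = g i y := by
        have : (g i x).val = (g i y).val := by omega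
        exact Fin.ext this
      have hrk : rankOf (relP i) {w | g i w = g i x} x <
          rankOf (relP i) {w | g i w = g i y} y := by
        rw [hgxy]
        exact rank_lt (htour i) (hgac i (g i y)) hgxy (rfl) hrel'
      dsimp only
      omega
    · -- different blocks
      dsimp only at hne2
      have hci := hcon i x hvalu
      have hcj := hcon j y hvalv
      have hpos := pos_lt r (k t) col.val s i j hij hci.1 hcj.1 hci.2 hcj.2
      have hr1 : rankOf (relP i) {w | g i w = g i x} x < N :=
        lt_of_le_of_lt (rankOf_le_card _ _ _) (hN i)
      have hmul : (posn r (k t) col.val s i + 1) * N ≤ posn r (k t) col.val s j * N :=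
        Nat.mul_le_mul_right N (by omega)
      have he : (posn r (k t) col.val s i + 1) * N = posn r (k t) col.val s i * N + N := by
        ring
      dsimp only
      omega
  -- lower bound: restrict a coloring to the block `s`
  have hlb : ∀ n ∈ {n : ℕ | ∃ c : (Σ i, V i) → Fin n, ∀ col : Fin n,
      AcyclicIn (compTournRel r relP) {v | c v = col}}, k s ≤ n := by
    rintro n ⟨c, hc⟩
    have hmem : n ∈ {n : ℕ | ∃ c' : V s → Fin n, ∀ col : Fin n,
        AcyclicIn (relP s) {v | c' v = col}} := by
      refine ⟨fun v => c ⟨s, v⟩, fun col a ha b hb d hd hab hbd => ?_⟩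
      have h1 : compTournRel r relP ⟨s, a⟩ ⟨s, b⟩ := Or.inl ⟨rfl, hab⟩
      have h2' : compTournRel r relP ⟨s, b⟩ ⟨s, d⟩ := Or.inl ⟨rfl, hbd⟩
      have h3 := hc col ⟨s, a⟩ ha ⟨s, b⟩ hb ⟨s, d⟩ hd h1 h2'
      rw [comp_same] at h3
      exact h3
    have hks := hk s
    unfold chromaticNumber at hks
    rw [← hks]
    exact Nat.sInf_le hmem
  unfold chromaticNumber
  exact le_antisymm (Nat.sInf_le hmemT) (le_csInf ⟨_, hmemT⟩ hlb)
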